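/- Let μ be a probability measure on a measurable space X and suppose K : X × X → ℝ satisfies K(ζ, ξ) ≤ ln(1/| |f(ζ)| − |f(ξ)| |) + M for some measurable f : X → ℂ, constant M, and all ζ ≠ ξ. If ν is the pushforward of μ under x ↦ |f(x)| and ν is the arcsine measure on [R, L_n], then ∬ K dμ dμ ≤ M − ln((L_n − R)/4). -/

import Mathlib

open MeasureTheory

namespace EnergyAux

open Set intervalIntegral
open scoped ENNReal

noncomputable def Lsin (x : ℝ) : ℝ := Real.log |Real.sin x|

lemma Lsin_periodic : Function.Periodic Lsin Real.pi := fun x => by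
  simp [Lsin, Real.sin_add_pi]

lemma il_log01 : IntervalIntegrable Real.log volume 0 1 := by
  have h2 : IntervalIntegrable (fun x : ℝ => 2 * x ^ (-(1:ℝ)/2)) volume 0 1 :=
    (intervalIntegrable_rpow' (by norm_num)).const_mul 2
  refine h2.mono_fun' Real.measurable_log.aestronglyMeasurable ?_
  filter_upwards [ae_restrict_mem measurableSet_uIoc] with x hx
  rw [uIoc_of_le (zero_le_one)] at hx
  have hx0 : 0 < x := hx.1
  have hlog : Real.log x ≤ 0 := Real.log_nonpos hx0.le hx.2
  have h1 : ‖Real.log x‖ = -Real.log x := by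
    rw [Real.norm_eq_abs, abs_of_nonpos hlog]
  have h2' : -Real.log x = 2 * Real.log (x ^ (-(1:ℝ)/2)) := by
    rw [Real.log_rpow hx0]; ring
  have h3 : Real.log (x ^ (-(1:ℝ)/2)) ≤ x ^ (-(1:ℝ)/2) :=
    Real.log_le_self (Real.rpow_pos_of_pos hx0 _).le
  rw [h1, h2']
  nlinarith [Real.rpow_pos_of_pos hx0 (-(1:ℝ)/2)]

lemma il_log (b : ℝ) (hb : 0 ≤ b) : IntervalIntegrable Real.log volume 0 b := by
  rcases le_total b 1 with h | h
  · exact il_log01.mono_set (Set.uIcc_subset_uIcc Set.left_mem_uIcc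
      (by rw [Set.uIcc_of_le zero_le_one]; exact ⟨hb, h⟩))
  · exact il_log01.trans (intervalIntegrable_log (Set.notMem_uIcc_of_lt zero_lt_one (by linarith)))

lemma il_Lsin_base : IntervalIntegrable Lsin volume 0 (Real.pi/2) := by
  have hg : IntervalIntegrable (fun x : ℝ => Real.log (Real.pi/2) - Real.log x) volume 0 (Real.pi/2) :=
    (intervalIntegrable_const (c := Real.log (Real.pi/2))).sub (il_log _ (by positivity))
  refine hg.mono_fun' ((Real.measurable_log.comp (measurable_abs.comp Real.measurable_sin)).aestronglyMeasurable) ?_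
  filter_upwards [ae_restrict_mem measurableSet_uIoc] with x hx
  rw [uIoc_of_le (by positivity : (0:ℝ) ≤ Real.pi/2)] at hx
  have hx0 : 0 < x := hx.1
  have hxpi : x < Real.pi := lt_of_le_of_lt hx.2 (by linarith [Real.pi_pos])
  have hsin : 0 < Real.sin x := Real.sin_pos_of_pos_of_lt_pi hx0 hxpi
  have hjord : 2 / Real.pi * x ≤ Real.sin x := Real.mul_le_sin hx0.le hx.2
  have hle1 : Real.sin x ≤ 1 := Real.sin_le_one x
  have habs : Lsin x = Real.log (Real.sin x) := by rw [Lsin, abs_of_pos hsin]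
  have hlogle : Real.log (Real.sin x) ≤ 0 := Real.log_nonpos hsin.le hle1
  have hlb : Real.log (2/Real.pi) + Real.log x ≤ Real.log (Real.sin x) := by
    rw [← Real.log_mul (by positivity) (ne_of_gt hx0)]
    exact Real.log_le_log (by positivity) hjord
  have hlogpi : Real.log (2/Real.pi) = - Real.log (Real.pi/2) := by
    rw [show (2/Real.pi : ℝ) = (Real.pi/2)⁻¹ by field_simp, Real.log_inv]
  rw [habs, Real.norm_eq_abs, abs_of_nonpos hlogle]
  rw [hlogpi] at hlb
  linarith

lemma il_Lsin_aux : IntervalIntegrable Lsin volume (-(Real.pi/2)) Real.pi := by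
  have h0 := il_Lsin_base
  have h1 : IntervalIntegrable Lsin volume (Real.pi/2) Real.pi := by
    have := h0.comp_sub_left Real.pi
    have heq : (fun x => Lsin (Real.pi - x)) = Lsin := by
      funext x; simp [Lsin, Real.sin_pi_sub]
    rw [heq] at this
    simpa [show Real.pi - Real.pi/2 = Real.pi/2 by ring] using this.symm
  have h2 : IntervalIntegrable Lsin volume (-(Real.pi/2)) 0 := by
    have := h0.comp_sub_left 0
    have heq : (fun x => Lsin (0 - x)) = Lsin := by
      funext x; simp [Lsin, Real.sin_neg]
    rw [heq] at this
    simpa using this.symm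
  exact (h2.trans h0).trans h1

lemma il_Lsin (a b : ℝ) (ha : -(Real.pi/2) ≤ a) (ha' : a ≤ Real.pi) (hb : -(Real.pi/2) ≤ b) (hb' : b ≤ Real.pi) :
    IntervalIntegrable Lsin volume a b := by
  refine il_Lsin_aux.mono_set (Set.uIcc_subset_uIcc ?_ ?_) <;>
    · rw [Set.uIcc_of_le (by linarith [Real.pi_pos] : -(Real.pi/2) ≤ Real.pi)]
      constructor <;> assumption


lemma integral_Lsin_pi : ∫ x in (0:ℝ)..Real.pi, Lsin x = -(Real.pi * Real.log 2) := by
  have hpi := Real.pi_pos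
  set S := ∫ x in (0:ℝ)..(Real.pi/2), Lsin x with hS
  -- reflection: ∫_{π/2}^{π} = S
  have hrefl : ∫ x in (Real.pi/2)..Real.pi, Lsin x = S := by
    have := intervalIntegral.integral_comp_sub_left (a := (0:ℝ)) (b := Real.pi/2) Lsin Real.pi
    have heq : (fun x => Lsin (Real.pi - x)) = Lsin := by
      funext x; simp [Lsin, Real.sin_pi_sub]
    rw [heq, show Real.pi - Real.pi/2 = Real.pi/2 by ring, sub_zero] at this
    exact this.symm
  have hsplit : ∫ x in (0:ℝ)..Real.pi, Lsin x = S + S := by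
    rw [← intervalIntegral.integral_add_adjacent_intervals (a := (0:ℝ)) (b := Real.pi/2)
      (c := Real.pi) il_Lsin_base (il_Lsin _ _ (by linarith) (by linarith) (by linarith) le_rfl)]
    rw [hrefl]
  -- doubling
  have hdouble : ∫ x in (0:ℝ)..(Real.pi/2), Lsin (2*x) = (2:ℝ)⁻¹ * ∫ x in (0:ℝ)..Real.pi, Lsin x := by
    have := intervalIntegral.integral_comp_mul_left (a := (0:ℝ)) (b := Real.pi/2) Lsin
      (c := (2:ℝ)) (by norm_num)
    simp only [mul_zero, smul_eq_mul] at this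
    rw [this, show (2:ℝ) * (Real.pi/2) = Real.pi by ring]
  have hcos : ∫ x in (0:ℝ)..(Real.pi/2), Lsin (Real.pi/2 - x) = S := by
    have := intervalIntegral.integral_comp_sub_left (a := (0:ℝ)) (b := Real.pi/2) Lsin (Real.pi/2)
    rw [this]
    norm_num [hS]
  have hident : ∫ x in (0:ℝ)..(Real.pi/2), Lsin (2*x)
      = ∫ x in (0:ℝ)..(Real.pi/2), (Real.log 2 + Lsin x + Lsin (Real.pi/2 - x)) := by
    refine intervalIntegral.integral_congr_ae ?_
    have hmem : ∀ᵐ x : ℝ ∂volume, x ≠ Real.pi/2 :=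
      ae_iff.2 (by simpa using measure_singleton (Real.pi/2) (μ := volume))
    filter_upwards [hmem] with x hne hx
    rw [uIoc_of_le (by linarith : (0:ℝ) ≤ Real.pi/2)] at hx
    have hx0 : 0 < x := hx.1
    have hx2 : x < Real.pi/2 := lt_of_le_of_ne hx.2 hne
    have hsin : 0 < Real.sin x := Real.sin_pos_of_pos_of_lt_pi hx0 (by linarith)
    have hcosx : 0 < Real.cos x := Real.cos_pos_of_mem_Ioo ⟨by linarith, hx2⟩
    rw [Lsin, Lsin, Lsin, Real.sin_two_mul, Real.sin_pi_div_two_sub]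
    rw [abs_of_pos (by positivity), abs_of_pos hsin, abs_of_pos hcosx]
    rw [Real.log_mul (by positivity) (ne_of_gt hcosx), Real.log_mul (by norm_num) (ne_of_gt hsin)]
    try ring
  have hcomp : IntervalIntegrable (fun x => Lsin (Real.pi/2 - x)) volume 0 (Real.pi/2) := by
    have := il_Lsin_base.comp_sub_left (Real.pi/2)
    simpa using this.symm
  have hsum : ∫ x in (0:ℝ)..(Real.pi/2), (Real.log 2 + Lsin x + Lsin (Real.pi/2 - x))
      = (Real.pi/2) * Real.log 2 + S + S := by
    rw [intervalIntegral.integral_add (by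
        exact (intervalIntegrable_const (c := Real.log 2)).add il_Lsin_base)
      hcomp,
      intervalIntegral.integral_add (intervalIntegrable_const (c := Real.log 2))
        il_Lsin_base]
    rw [intervalIntegral.integral_const, hcos]
    simp [smul_eq_mul]
    try ring
  have key : (2:ℝ)⁻¹ * (S + S) = (Real.pi/2) * Real.log 2 + S + S := by
    rw [← hsplit, ← hdouble, hident, hsum]
  have hSval : S = -(Real.pi/2 * Real.log 2) := by linarith
  rw [hsplit, hSval]; ring

lemma integral_Lsin_period (a : ℝ) :
    ∫ x in a..(a + Real.pi), Lsin x = -(Real.pi * Real.log 2) := by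
  have := Lsin_periodic.intervalIntegral_add_eq a 0
  rw [this, zero_add, integral_Lsin_pi]


lemma measurable_Lsin : Measurable Lsin :=
  Real.measurable_log.comp Real.measurable_sin.abs

lemma Lsin_nonpos (x : ℝ) : Lsin x ≤ 0 :=
  Real.log_nonpos (abs_nonneg _) (abs_le.2 ⟨Real.neg_one_le_sin x, Real.sin_le_one x⟩)

lemma lintegral_image_1d {s : Set ℝ} {f f' : ℝ → ℝ} (hs : MeasurableSet s)
    (hf' : ∀ x ∈ s, HasDerivWithinAt f (f' x) s x) (hf : Set.InjOn f s) (g : ℝ → ℝ≥0∞) :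
    ∫⁻ x in f '' s, g x = ∫⁻ x in s, ENNReal.ofReal |f' x| * g (f x) := by
  simpa only [ContinuousLinearMap.det_toSpanSingleton] using
    MeasureTheory.lintegral_image_eq_lintegral_abs_det_fderiv_mul volume hs
      (fun x hx => (hf' x hx).hasFDerivWithinAt) hf g



lemma phi_image {R Ln : ℝ} (hRL : R < Ln) :
    (fun θ : ℝ => (R+Ln)/2 + (Ln-R)/2 * Real.cos θ) '' Set.Ioo 0 Real.pi = Set.Ioo R Ln := by
  have hr : 0 < (Ln-R)/2 := by linarith
  ext y
  constructor
  · rintro ⟨θ, hθ, rfl⟩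
    have h1 : Real.cos θ < 1 := by
      have := Real.strictAntiOn_cos (left_mem_Icc.2 Real.pi_pos.le)
        ⟨hθ.1.le, hθ.2.le⟩ hθ.1
      simpa using this
    have h2 : -1 < Real.cos θ := by
      have := Real.strictAntiOn_cos ⟨hθ.1.le, hθ.2.le⟩
        (right_mem_Icc.2 Real.pi_pos.le) hθ.2
      simpa using this
    constructor <;> nlinarith
  · intro hy
    have ht : (y - (R+Ln)/2) / ((Ln-R)/2) ∈ Set.Ioo (-1 : ℝ) 1 := by
      constructor
      · rw [lt_div_iff₀ hr]; nlinarith [hy.1]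
      · rw [div_lt_iff₀ hr]; nlinarith [hy.2]
    refine ⟨Real.arccos ((y - (R+Ln)/2) / ((Ln-R)/2)), ?_, ?_⟩
    · exact ⟨Real.arccos_pos.2 ht.2,
        lt_of_le_of_ne (Real.arccos_le_pi _) (fun h => absurd (Real.arccos_eq_pi.1 h) (not_le.2 ht.1))⟩
    · show (R+Ln)/2 + (Ln-R)/2 * Real.cos _ = y
      rw [Real.cos_arccos ht.1.le ht.2.le]
      have hne : Ln - R ≠ 0 := by linarith
      field_simp
      ring

lemma phi_injOn {R Ln : ℝ} (hRL : R < Ln) :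
    Set.InjOn (fun θ : ℝ => (R+Ln)/2 + (Ln-R)/2 * Real.cos θ) (Set.Ioo 0 Real.pi) := by
  intro a ha b hb h
  have hr : ((Ln-R)/2 : ℝ) ≠ 0 := ne_of_gt (by linarith)
  have hcos : Real.cos a = Real.cos b := by
    exact mul_left_cancel₀ hr (add_left_cancel h)
  exact Real.injOn_cos ⟨ha.1.le, ha.2.le⟩ ⟨hb.1.le, hb.2.le⟩ hcos

lemma inner_calc {R Ln : ℝ} (hRL : R < Ln) {x : ℝ} (hx : x ∈ Set.Ioo R Ln) :
    ∫⁻ y, ENNReal.ofReal (Real.log ((Ln - R) / |x - y|))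
      ∂((volume.restrict (Set.Ioo R Ln)).withDensity
        (fun t => ENNReal.ofReal (1 / (Real.pi * Real.sqrt ((t - R) * (Ln - t))))))
    = ENNReal.ofReal (Real.log 4) := by
  have hpi := Real.pi_pos
  set c : ℝ := (R+Ln)/2 with hceq
  set r : ℝ := (Ln-R)/2 with hreq
  have hr : 0 < r := by rw [hreq]; linarith
  -- get the angle α
  obtain ⟨α, hα, hxα⟩ : ∃ α ∈ Set.Ioo 0 Real.pi, c + r * Real.cos α = x := by
    have := (phi_image hRL).symm ▸ hx
    obtain ⟨α, hα, h⟩ := this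
    exact ⟨α, hα, h⟩
  -- measurability
  have mρ : Measurable (fun t : ℝ => ENNReal.ofReal (1 / (Real.pi * Real.sqrt ((t - R) * (Ln - t))))) :=
    ENNReal.measurable_ofReal.comp (measurable_const.div
      (measurable_const.mul ((measurable_id.sub measurable_const).mul
        (measurable_const.sub measurable_id)).sqrt))
  have mG : Measurable (fun y : ℝ => ENNReal.ofReal (Real.log ((Ln - R) / |x - y|))) :=
    ENNReal.measurable_ofReal.comp ((measurable_const.div
      (measurable_const.sub measurable_id).abs).log)
  rw [lintegral_withDensity_eq_lintegral_mul _ mρ mG]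
  have himg : Set.Ioo R Ln = (fun θ : ℝ => c + r * Real.cos θ) '' Set.Ioo 0 Real.pi :=
    (phi_image hRL).symm
  rw [show (volume.restrict (Set.Ioo R Ln)) =
      (volume.restrict ((fun θ : ℝ => c + r * Real.cos θ) '' Set.Ioo 0 Real.pi)) by rw [← himg]]
  have hderiv : ∀ θ ∈ Set.Ioo (0:ℝ) Real.pi,
      HasDerivWithinAt (fun t => c + r * Real.cos t) (-(r * Real.sin θ)) (Set.Ioo 0 Real.pi) θ := by
    intro θ _
    have := (((Real.hasDerivAt_cos θ).const_mul r).const_add c).hasDerivWithinAt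
      (s := Set.Ioo (0:ℝ) Real.pi)
    simpa [mul_neg] using this
  rw [lintegral_image_1d measurableSet_Ioo hderiv (phi_injOn hRL) _]
  -- pointwise simplification a.e. on Ioo 0 π
  have hcongr : ∀ᵐ θ ∂(volume.restrict (Set.Ioo (0:ℝ) Real.pi)),
      ENNReal.ofReal |(-(r * Real.sin θ))| *
        ((fun t => ENNReal.ofReal (1 / (Real.pi * Real.sqrt ((t - R) * (Ln - t))))) *
          (fun y => ENNReal.ofReal (Real.log ((Ln - R) / |x - y|)))) (c + r * Real.cos θ)
      = ENNReal.ofReal (1/Real.pi) *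
          (ENNReal.ofReal (-Lsin ((1/2)*θ + α/2)) + ENNReal.ofReal (-Lsin ((-1/2)*θ + α/2))) := by
    have hane : ∀ᵐ θ : ℝ ∂(volume.restrict (Set.Ioo (0:ℝ) Real.pi)), θ ≠ α := by
      refine ae_restrict_of_ae ?_
      exact ae_iff.2 (by simpa using measure_singleton α (μ := volume))
    filter_upwards [ae_restrict_mem measurableSet_Ioo, hane] with θ hθ hθα
    have hsin : 0 < Real.sin θ := Real.sin_pos_of_pos_of_lt_pi hθ.1 hθ.2
    set s1 := Real.sin ((1/2)*θ + α/2) with hs1eq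
    set s2 := Real.sin ((-1/2)*θ + α/2) with hs2eq
    have hs1pos : 0 < s1 := by
      apply Real.sin_pos_of_pos_of_lt_pi <;> [nlinarith [hθ.1, hα.1]; nlinarith [hθ.2, hα.2]]
    have hs2ne : s2 ≠ 0 := by
      intro h
      have hmem : (-1/2)*θ + α/2 = 0 := by
        have h1 : -Real.pi < (-1/2)*θ + α/2 := by nlinarith [hθ.2, hα.1]
        have h2 : (-1/2)*θ + α/2 < Real.pi := by nlinarith [hθ.1, hα.2]
        exact (Real.sin_eq_zero_iff_of_lt_of_lt h1 h2).1 h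
      apply hθα; linarith
    have hs1le : |s1| ≤ 1 := abs_le.2 ⟨Real.neg_one_le_sin _, Real.sin_le_one _⟩
    have hs2le : |s2| ≤ 1 := abs_le.2 ⟨Real.neg_one_le_sin _, Real.sin_le_one _⟩
    -- density factor
    have hprod : ((c + r * Real.cos θ) - R) * (Ln - (c + r * Real.cos θ))
        = (r * Real.sin θ)^2 := by
      rw [hceq, hreq]
      linear_combination (-((Ln-R)/2)^2) * Real.sin_sq_add_cos_sq θ
    have hsqrt : Real.sqrt (((c + r * Real.cos θ) - R) * (Ln - (c + r * Real.cos θ)))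
        = r * Real.sin θ := by
      rw [hprod, Real.sqrt_sq (by positivity)]
    -- distance factor
    have hcc : Real.cos α - Real.cos θ = -2 * s1 * s2 := by
      rw [Real.cos_sub_cos, hs1eq, hs2eq]
      rw [show (α + θ)/2 = (1/2)*θ + α/2 by ring, show (α - θ)/2 = (-1/2)*θ + α/2 by ring]
    have key1 : x - (c + r * Real.cos θ) = r * (-2 * s1 * s2) := by
      rw [← hxα, ← hcc]; ring
    have habs : |x - (c + r * Real.cos θ)| = 2*r * (|s1| * |s2|) := by
      rw [key1, abs_mul, abs_of_pos hr]
      rw [show (-2 : ℝ) * s1 * s2 = -(2 * (s1 * s2)) by ring, abs_neg, abs_mul, abs_mul]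
      rw [abs_of_pos (by norm_num : (0:ℝ) < 2)]
      ring
    have hq : 0 < |s1| * |s2| := mul_pos (abs_pos.2 (ne_of_gt hs1pos)) (abs_pos.2 hs2ne)
    have hLnR : Ln - R = 2*r := by rw [hreq]; ring
    have hratio : (Ln - R) / |x - (c + r * Real.cos θ)| = 1/(|s1| * |s2|) := by
      rw [hLnR, habs, div_mul_eq_div_div, div_self (by positivity), one_div]
    have hlogval : Real.log ((Ln - R) / |x - (c + r * Real.cos θ)|)
        = -Lsin ((1/2)*θ + α/2) + -Lsin ((-1/2)*θ + α/2) := by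
      rw [hratio, one_div, Real.log_inv,
        Real.log_mul (ne_of_gt (abs_pos.2 (ne_of_gt hs1pos))) (ne_of_gt (abs_pos.2 hs2ne))]
      simp [Lsin, hs1eq, hs2eq]
      ring
    have hnn1 : 0 ≤ -Lsin ((1/2)*θ + α/2) := by
      simp only [neg_nonneg]; exact Lsin_nonpos _
    have hnn2 : 0 ≤ -Lsin ((-1/2)*θ + α/2) := by
      simp only [neg_nonneg]; exact Lsin_nonpos _
    simp only [Pi.mul_apply]
    rw [hsqrt, hlogval, ENNReal.ofReal_add hnn1 hnn2]
    have habs' : |(-(r * Real.sin θ))| = r * Real.sin θ := by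
      rw [abs_neg, abs_of_pos (by positivity)]
    have hpine : Real.pi ≠ 0 := ne_of_gt hpi
    have hrsne : r * Real.sin θ ≠ 0 := by positivity
    have hmul : (r * Real.sin θ) * (1/(Real.pi * (r * Real.sin θ))) = 1/Real.pi := by
      field_simp
    rw [habs', ← mul_assoc, ← ENNReal.ofReal_mul (by positivity), hmul]
  rw [lintegral_congr_ae hcongr]
  -- measurability of the two pieces
  have mA : Measurable fun θ : ℝ => ENNReal.ofReal (-Lsin ((1/2)*θ + α/2)) :=
    ENNReal.measurable_ofReal.comp
      ((measurable_Lsin.comp ((measurable_id.const_mul (1/2 : ℝ)).add_const (α/2))).neg)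
  rw [lintegral_const_mul' _ _ ENNReal.ofReal_ne_top, lintegral_add_left mA]
  -- interval integrability of the two pieces
  have hb1 : -(Real.pi/2) ≤ α/2 := by nlinarith [hα.1]
  have hb2 : α/2 ≤ Real.pi := by nlinarith [hα.2]
  have hb3 : -(Real.pi/2) ≤ α/2 + Real.pi/2 := by nlinarith [hα.1]
  have hb4 : α/2 + Real.pi/2 ≤ Real.pi := by nlinarith [hα.2]
  have hb5 : -(Real.pi/2) ≤ α/2 - Real.pi/2 := by nlinarith [hα.1]
  have hb6 : α/2 - Real.pi/2 ≤ Real.pi := by nlinarith [hα.2, hpi]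
  have iiA : IntervalIntegrable (fun θ => Lsin ((1/2)*θ + α/2)) volume 0 Real.pi := by
    have base := il_Lsin (α/2) (α/2 + Real.pi/2) hb1 hb2 hb3 hb4
    have step1 := (base.comp_mul_left (c := 1/2)).comp_add_right α
    have he1 : (α/2)/(1/2 : ℝ) - α = 0 := by ring
    have he2 : (α/2 + Real.pi/2)/(1/2 : ℝ) - α = Real.pi := by ring
    rw [he1, he2] at step1
    have hfe : (fun x => Lsin ((1/2) * (x + α))) = fun θ => Lsin ((1/2)*θ + α/2) := by
      funext θ; congr 1; ring
    rwa [hfe] at step1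
  have iiB : IntervalIntegrable (fun θ => Lsin ((-1/2)*θ + α/2)) volume 0 Real.pi := by
    have base := il_Lsin (α/2) (α/2 - Real.pi/2) hb1 hb2 hb5 hb6
    have step1 := (base.comp_mul_left (c := -1/2)).comp_add_right (-α)
    have he1 : (α/2)/(-1/2 : ℝ) - (-α) = 0 := by ring
    have he2 : (α/2 - Real.pi/2)/(-1/2 : ℝ) - (-α) = Real.pi := by ring
    rw [he1, he2] at step1
    have hfe : (fun x => Lsin ((-1/2) * (x + -α))) = fun θ => Lsin ((-1/2)*θ + α/2) := by
      funext θ; congr 1; ring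
    rwa [hfe] at step1
  -- convert the two lintegrals to real integrals
  have hIA : IntegrableOn (fun θ => -Lsin ((1/2)*θ + α/2)) (Set.Ioo 0 Real.pi) volume := by
    have h : IntegrableOn (fun θ => -Lsin ((1/2)*θ + α/2)) (Set.Ioc 0 Real.pi) volume :=
      ((intervalIntegrable_iff_integrableOn_Ioc_of_le Real.pi_pos.le).1 iiA).neg
    exact h.mono_set Set.Ioo_subset_Ioc_self
  have hIB : IntegrableOn (fun θ => -Lsin ((-1/2)*θ + α/2)) (Set.Ioo 0 Real.pi) volume := by
    have h : IntegrableOn (fun θ => -Lsin ((-1/2)*θ + α/2)) (Set.Ioc 0 Real.pi) volume :=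
      ((intervalIntegrable_iff_integrableOn_Ioc_of_le Real.pi_pos.le).1 iiB).neg
    exact h.mono_set Set.Ioo_subset_Ioc_self
  have hnnA : 0 ≤ᵐ[volume.restrict (Set.Ioo (0:ℝ) Real.pi)]
      fun θ => -Lsin ((1/2)*θ + α/2) :=
    Filter.Eventually.of_forall fun θ => neg_nonneg.2 (Lsin_nonpos _)
  have hnnB : 0 ≤ᵐ[volume.restrict (Set.Ioo (0:ℝ) Real.pi)]
      fun θ => -Lsin ((-1/2)*θ + α/2) :=
    Filter.Eventually.of_forall fun θ => neg_nonneg.2 (Lsin_nonpos _)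
  rw [← ofReal_integral_eq_lintegral_ofReal hIA hnnA,
    ← ofReal_integral_eq_lintegral_ofReal hIB hnnB]
  -- evaluate the two real integrals
  have hVA : ∫ θ in Set.Ioo (0:ℝ) Real.pi, -Lsin ((1/2)*θ + α/2)
      = -(2 * ∫ u in (α/2)..(α/2 + Real.pi/2), Lsin u) := by
    rw [← integral_Ioc_eq_integral_Ioo,
      ← intervalIntegral.integral_of_le Real.pi_pos.le, intervalIntegral.integral_neg]
    congr 1
    have := intervalIntegral.integral_comp_mul_add (a := (0:ℝ)) (b := Real.pi) Lsin
      (by norm_num : (1/2 : ℝ) ≠ 0) (α/2)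
    rw [show (1/2 : ℝ) * 0 + α/2 = α/2 by ring,
      show (1/2 : ℝ) * Real.pi + α/2 = α/2 + Real.pi/2 by ring] at this
    rw [this]
    norm_num
  have hVB : ∫ θ in Set.Ioo (0:ℝ) Real.pi, -Lsin ((-1/2)*θ + α/2)
      = -(2 * ∫ u in (α/2 - Real.pi/2)..(α/2), Lsin u) := by
    rw [← integral_Ioc_eq_integral_Ioo,
      ← intervalIntegral.integral_of_le Real.pi_pos.le, intervalIntegral.integral_neg]
    congr 1
    have := intervalIntegral.integral_comp_mul_add (a := (0:ℝ)) (b := Real.pi) Lsin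
      (by norm_num : (-1/2 : ℝ) ≠ 0) (α/2)
    rw [this, show (-1/2 : ℝ) * 0 + α/2 = α/2 by ring,
      show (-1/2 : ℝ) * Real.pi + α/2 = α/2 - Real.pi/2 by ring,
      intervalIntegral.integral_symm]
    norm_num
  -- the sum of the two interval integrals over adjacent intervals
  have hJA : IntervalIntegrable Lsin volume (α/2) (α/2 + Real.pi/2) :=
    il_Lsin _ _ hb1 hb2 hb3 hb4
  have hJB : IntervalIntegrable Lsin volume (α/2 - Real.pi/2) (α/2) :=
    il_Lsin _ _ hb5 hb6 hb1 hb2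
  have hsum : (∫ u in (α/2 - Real.pi/2)..(α/2), Lsin u)
      + (∫ u in (α/2)..(α/2 + Real.pi/2), Lsin u) = -(Real.pi * Real.log 2) := by
    rw [intervalIntegral.integral_add_adjacent_intervals hJB hJA]
    have := integral_Lsin_period (α/2 - Real.pi/2)
    rwa [show α/2 - Real.pi/2 + Real.pi = α/2 + Real.pi/2 by ring] at this
  -- nonnegativity of the two values
  have hJAle : (∫ u in (α/2)..(α/2 + Real.pi/2), Lsin u) ≤ 0 := by
    rw [intervalIntegral.integral_of_le (by linarith : α/2 ≤ α/2 + Real.pi/2)]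
    exact integral_nonpos fun u => Lsin_nonpos u
  have hJBle : (∫ u in (α/2 - Real.pi/2)..(α/2), Lsin u) ≤ 0 := by
    rw [intervalIntegral.integral_of_le (by linarith : α/2 - Real.pi/2 ≤ α/2)]
    exact integral_nonpos fun u => Lsin_nonpos u
  rw [hVA, hVB, ← ENNReal.ofReal_add (by linarith) (by linarith),
    ← ENNReal.ofReal_mul (by positivity)]
  congr 1
  have hfin : -(2 * ∫ u in (α/2)..(α/2 + Real.pi/2), Lsin u)
      + -(2 * ∫ u in (α/2 - Real.pi/2)..(α/2), Lsin u) = 2 * (Real.pi * Real.log 2) := by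
    linarith [hsum]
  rw [hfin, show (4:ℝ) = 2^2 by norm_num, Real.log_pow]
  push_cast
  field_simp

end EnergyAux

open Set intervalIntegral EnergyAux
open scoped ENNReal

/-- If K(ζ,ξ) ≤ ln(1/||f(ζ)|−|f(ξ)||) + M off the diagonal and the pushforward
of the probability measure μ under |f| is the arcsine measure on [R, Lₙ],
then ∬ K dμ dμ ≤ M − ln((Lₙ − R)/4). -/

theorem energy_upper_bound {X : Type*} [MeasurableSpace X]
    (μ : Measure X) [IsProbabilityMeasure μ]
    (K : X × X → ℝ) (f : X → ℂ) (hf : Measurable f)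
    (M R Ln : ℝ) (hRL : R < Ln)
    (hK : ∀ ζ ξ : X, ζ ≠ ξ →
      K (ζ, ξ) ≤ Real.log (1 / |‖f ζ‖ - ‖f ξ‖|) + M)
    (hKint : Integrable K (μ.prod μ))
    (hpush : Measure.map (fun x => (‖f x‖ : ℝ)) μ =
      (volume.restrict (Set.Ioo R Ln)).withDensity
        (fun x => ENNReal.ofReal (1 / (Real.pi * Real.sqrt ((x - R) * (Ln - x)))))) :
    ∫ p, K p ∂(μ.prod μ) ≤ M - Real.log ((Ln - R) / 4) := by
  have hLnR : (0:ℝ) < Ln - R := by linarith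
  set g : X → ℝ := fun x => ‖f x‖ with hgdef
  have hgm : Measurable g := hf.norm
  set ν : Measure ℝ := (volume.restrict (Set.Ioo R Ln)).withDensity
      (fun x => ENNReal.ofReal (1 / (Real.pi * Real.sqrt ((x - R) * (Ln - x))))) with hνdef
  have hmap : Measure.map g μ = ν := hpush
  have hνprob : IsProbabilityMeasure ν := hmap ▸ Measure.isProbabilityMeasure_map hgm.aemeasurable
  -- ν lives on Ioo R Ln and has no atoms
  have hν_compl : ν (Set.Ioo R Ln)ᶜ = 0 := by
    rw [hνdef, withDensity_apply _ measurableSet_Ioo.compl,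
      Measure.restrict_restrict measurableSet_Ioo.compl, Set.compl_inter_self]
    simp
  have hν_single : ∀ a : ℝ, ν {a} = 0 := by
    intro a
    rw [hνdef, withDensity_apply _ (measurableSet_singleton a)]
    refine setLIntegral_measure_zero _ _ ?_
    rw [Measure.restrict_apply (measurableSet_singleton a)]
    exact measure_mono_null Set.inter_subset_left (measure_singleton a)
  -- product pushforward
  have hmap2 : Measure.map (Prod.map g g) (μ.prod μ) = ν.prod ν := by
    rw [← Measure.map_prod_map _ _ hgm hgm, hmap]
  -- the good set
  set T : Set (ℝ × ℝ) := {q | q.1 ∈ Set.Ioo R Ln ∧ q.2 ∈ Set.Ioo R Ln ∧ q.1 ≠ q.2} with hTdef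
  have hTm : MeasurableSet T := by
    refine (measurable_fst measurableSet_Ioo).inter ((measurable_snd measurableSet_Ioo).inter ?_)
    exact (measurableSet_eq_fun measurable_fst measurable_snd).compl
  have hTc : (ν.prod ν) Tᶜ = 0 := by
    have hsub : Tᶜ ⊆ ((Set.Ioo R Ln)ᶜ ×ˢ (Set.univ : Set ℝ)) ∪
        ((Set.univ : Set ℝ) ×ˢ (Set.Ioo R Ln)ᶜ) ∪ {q : ℝ × ℝ | q.1 = q.2} := by
      intro q hq
      simp only [hTdef, Set.mem_compl_iff, Set.mem_setOf_eq, not_and_or, not_not] at hq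
      rcases hq with h | h | h
      · exact Or.inl (Or.inl ⟨h, trivial⟩)
      · exact Or.inl (Or.inr ⟨trivial, h⟩)
      · exact Or.inr h
    refine measure_mono_null hsub ?_
    refine measure_union_null (measure_union_null ?_ ?_) ?_
    · rw [Measure.prod_prod]; rw [hν_compl]; simp
    · rw [Measure.prod_prod]; rw [hν_compl]; simp
    · have hdm : MeasurableSet {q : ℝ × ℝ | q.1 = q.2} :=
        measurableSet_eq_fun measurable_fst measurable_snd
      rw [Measure.prod_apply hdm]
      have : ∀ a : ℝ, ν (Prod.mk a ⁻¹' {q : ℝ × ℝ | q.1 = q.2}) = 0 := by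
        intro a
        have : (Prod.mk a ⁻¹' {q : ℝ × ℝ | q.1 = q.2}) = {a} := by
          ext b; simp [eq_comm]
        rw [this]; exact hν_single a
      simp only [this]
      simp
  have hae : ∀ᵐ p ∂(μ.prod μ), g p.1 ∈ Set.Ioo R Ln ∧ g p.2 ∈ Set.Ioo R Ln ∧ g p.1 ≠ g p.2 := by
    have hpre : (μ.prod μ) ((Prod.map g g) ⁻¹' Tᶜ) = 0 := by
      rw [← Measure.map_apply (hgm.prodMap hgm) hTm.compl, hmap2, hTc]
    rw [ae_iff]
    exact hpre
  -- pointwise bound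
  set b : ℝ := M - Real.log (Ln - R) with hbdef
  have hptw : ∀ᵐ p ∂(μ.prod μ),
      K p - b ≤ Real.log ((Ln - R) / |g p.1 - g p.2|) := by
    filter_upwards [hae] with p hp
    have hne : p.1 ≠ p.2 := fun h => hp.2.2 (by rw [h])
    have hKp := hK p.1 p.2 hne
    have hd : |g p.1 - g p.2| ≠ 0 := fun h => hp.2.2 (by
      have := abs_eq_zero.1 h; linarith [this, sub_eq_zero.1 this])
    rw [Prod.mk.eta] at hKp
    rw [Real.log_div (ne_of_gt hLnR) hd]
    rw [one_div, Real.log_inv] at hKp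
    rw [hbdef]
    linarith
  -- the key lintegral
  set J : ℝ≥0∞ := ∫⁻ p, ENNReal.ofReal (Real.log ((Ln - R) / |g p.1 - g p.2|)) ∂(μ.prod μ)
    with hJdef
  have mq : Measurable fun q : ℝ × ℝ => ENNReal.ofReal (Real.log ((Ln - R) / |q.1 - q.2|)) :=
    ENNReal.measurable_ofReal.comp ((measurable_const.div (measurable_fst.sub measurable_snd).abs).log)
  have hJle : J ≤ ENNReal.ofReal (Real.log 4) := by
    have hJeq : J = ∫⁻ q, ENNReal.ofReal (Real.log ((Ln - R) / |q.1 - q.2|)) ∂(ν.prod ν) := by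
      rw [hJdef, ← hmap2, lintegral_map mq (hgm.prodMap hgm)]
      rfl
    rw [hJeq, lintegral_prod _ mq.aemeasurable]
    have haeν : ∀ᵐ x ∂ν, x ∈ Set.Ioo R Ln := by
      rw [ae_iff]
      exact hν_compl
    calc ∫⁻ x, ∫⁻ y, ENNReal.ofReal (Real.log ((Ln - R) / |x - y|)) ∂ν ∂ν
        ≤ ∫⁻ _, ENNReal.ofReal (Real.log 4) ∂ν := by
          refine lintegral_mono_ae ?_
          filter_upwards [haeν] with x hx
          rw [hνdef]
          exact le_of_eq (inner_calc hRL hx)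
      _ = ENNReal.ofReal (Real.log 4) := by
          rw [lintegral_const, measure_univ, mul_one]
  have hJtop : J ≠ ⊤ := ne_top_of_le_ne_top ENNReal.ofReal_ne_top hJle
  -- assemble
  have hK1 : Integrable (fun p => K p - b) (μ.prod μ) := hKint.sub (integrable_const b)
  have hK2 : Integrable (fun p => max (K p - b) 0) (μ.prod μ) := hK1.pos_part
  have step1 : ∫ p, (K p - b) ∂(μ.prod μ) = (∫ p, K p ∂(μ.prod μ)) - b := by
    rw [integral_sub hKint (integrable_const b)]
    simp
  have step2 : ∫ p, (K p - b) ∂(μ.prod μ) ≤ ∫ p, max (K p - b) 0 ∂(μ.prod μ) :=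
    integral_mono hK1 hK2 fun p => le_max_left _ _
  have step3 : ∫ p, max (K p - b) 0 ∂(μ.prod μ)
      = (∫⁻ p, ENNReal.ofReal (max (K p - b) 0) ∂(μ.prod μ)).toReal :=
    integral_eq_lintegral_of_nonneg_ae (Filter.Eventually.of_forall fun p => le_max_right _ _)
      hK2.aestronglyMeasurable
  have hofmax : ∀ a : ℝ, ENNReal.ofReal (max a 0) = ENNReal.ofReal a := by
    intro a
    rcases le_total a 0 with h | h
    · rw [max_eq_right h, ENNReal.ofReal_zero, (ENNReal.ofReal_eq_zero).2 h]
    · rw [max_eq_left h]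
  have step4 : (∫⁻ p, ENNReal.ofReal (max (K p - b) 0) ∂(μ.prod μ)) ≤ J := by
    simp only [hofmax]
    rw [hJdef]
    refine lintegral_mono_ae ?_
    filter_upwards [hptw] with p hp
    exact ENNReal.ofReal_le_ofReal hp
  have step5 : ∫ p, max (K p - b) 0 ∂(μ.prod μ) ≤ Real.log 4 := by
    rw [step3]
    calc (∫⁻ p, ENNReal.ofReal (max (K p - b) 0) ∂(μ.prod μ)).toReal
        ≤ J.toReal := ENNReal.toReal_mono hJtop step4
      _ ≤ (ENNReal.ofReal (Real.log 4)).toReal :=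
          ENNReal.toReal_mono ENNReal.ofReal_ne_top hJle
      _ = Real.log 4 := ENNReal.toReal_ofReal (Real.log_nonneg (by norm_num))
  have hfinal : ∫ p, K p ∂(μ.prod μ) ≤ Real.log 4 + b := by
    have := le_trans step2 step5
    linarith [step1]
  rw [show M - Real.log ((Ln - R)/4) = M - (Real.log (Ln - R) - Real.log 4) by
    rw [Real.log_div (ne_of_gt hLnR) (by norm_num)]]
  rw [hbdef] at hfinal
  linarith
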